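/- Let T = [t_{n,k}] satisfy t_{0,0} = 1, t_{n,k} = a_n t_{n−1,k−1} + b_n t_{n−1,k} + c_n t_{n−2,k−1} (t_{n,k} = 0 unless 0 ≤ k ≤ n) with all a_n, b_n, c_n ≥ 0. Then the reversal matrix [t_{n,n−k}]_{n,k≥0} (entry 0 when k > n) is totally positive. -/

import Mathlib

/-- An infinite real matrix is totally positive if all its minors are nonnegative. -/
def TotallyPos (A : ℕ → ℕ → ℝ) : Prop :=
  ∀ (k : ℕ) (f g : Fin k → ℕ), StrictMono f → StrictMono g →
    0 ≤ Matrix.det (Matrix.of fun i j : Fin k => A (f i) (g j))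

namespace NRecAux

/-- Row combination operator on a vector: `(comb x)(n) = β n * x n + γ n * x (n-1)`. -/
def combv (β γ : ℕ → ℝ) (x : ℕ → ℝ) : ℕ → ℝ
  | 0 => β 0 * x 0
  | n + 1 => β (n + 1) * x (n + 1) + γ (n + 1) * x n

lemma combv_eq (β γ : ℕ → ℝ) (x : ℕ → ℝ) (n : ℕ) :
    combv β γ x n = β n * x n + (if n = 0 then 0 else γ n * x (n - 1)) := by
  cases n <;> simp [combv]

/-- The key total-positivity preservation lemma: if all minors (over any
strictly increasing row choice) of the matrix whose columns are `v j` are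
nonnegative, the same holds after applying `combv` to each column. -/
lemma comb_det (β γ : ℕ → ℝ) (hβ : ∀ n, 0 ≤ β n) (hγ : ∀ n, 0 ≤ γ n)
    (s : ℕ) (v : Fin s → ℕ → ℝ)
    (H : ∀ f : Fin s → ℕ, StrictMono f →
      0 ≤ Matrix.det (Matrix.of fun i j : Fin s => v j (f i)))
    (f : Fin s → ℕ) (hf : StrictMono f) :
    0 ≤ Matrix.det (Matrix.of fun i j : Fin s => combv β γ (v j) (f i)) := by
  classical
  set u : Fin s → (Fin s → ℝ) := fun i j => v j (f i) with hu
  set w : Fin s → (Fin s → ℝ) := fun i j => if f i = 0 then 0 else v j (f i - 1) with hw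
  set cβ : Fin s → ℝ := fun i => β (f i) with hcβ
  set cγ : Fin s → ℝ := fun i => if f i = 0 then 0 else γ (f i) with hcγ
  have hM : (Matrix.of fun i j : Fin s => combv β γ (v j) (f i)) =
      ((fun i => cβ i • u i) + (fun i => cγ i • w i)) := by
    funext i j
    simp only [Matrix.of_apply, Pi.add_apply, Pi.smul_apply, smul_eq_mul, hu, hw, hcβ, hcγ,
      combv_eq]
    by_cases h : f i = 0 <;> simp [h]
  have hdet : Matrix.det (Matrix.of fun i j : Fin s => combv β γ (v j) (f i)) =
      (Matrix.detRowAlternating (R := ℝ) (n := Fin s))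
        ((fun i => cβ i • u i) + (fun i => cγ i • w i)) := by
    rw [hM]; rfl
  rw [hdet]
  rw [show (Matrix.detRowAlternating (R := ℝ) (n := Fin s))
      ((fun i => cβ i • u i) + (fun i => cγ i • w i)) =
      (Matrix.detRowAlternating (R := ℝ) (n := Fin s)).toMultilinearMap
      ((fun i => cβ i • u i) + (fun i => cγ i • w i)) from rfl,
    (Matrix.detRowAlternating (R := ℝ) (n := Fin s)).toMultilinearMap.map_add_univ]
  apply Finset.sum_nonneg
  intro S _
  have hpw : (S.piecewise (fun i => cβ i • u i) (fun i => cγ i • w i)) =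
      fun i => (if i ∈ S then cβ i else cγ i) • (if i ∈ S then u i else w i) := by
    funext i
    by_cases h : i ∈ S <;> simp [Finset.piecewise, h]
  rw [hpw, (Matrix.detRowAlternating (R := ℝ) (n := Fin s)).toMultilinearMap.map_smul_univ]

  have hcoef : 0 ≤ ∏ i, (if i ∈ S then cβ i else cγ i) := by
    apply Finset.prod_nonneg
    intro i _
    by_cases h : i ∈ S <;> simp only [h, if_true, if_false]
    · exact hβ _
    · by_cases h0 : f i = 0 <;> simp [hcγ, h0, hγ _]
  have hrows : 0 ≤ (Matrix.detRowAlternating (R := ℝ) (n := Fin s))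
      (fun i => if i ∈ S then u i else w i) := by
    by_cases hzero : ∃ i, i ∉ S ∧ f i = 0
    · obtain ⟨i, hiS, hfi⟩ := hzero
      have : Matrix.det (Matrix.of fun i j : Fin s =>
          (fun i => if i ∈ S then u i else w i) i j) = 0 := by
        apply Matrix.det_eq_zero_of_row_eq_zero i
        intro j
        simp [hiS, hw, hfi]
      rw [show (Matrix.detRowAlternating (R := ℝ) (n := Fin s))
          (fun i => if i ∈ S then u i else w i) = Matrix.det (Matrix.of fun i j : Fin s =>
          (fun i => if i ∈ S then u i else w i) i j) from rfl, this]
    · push_neg at hzero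
      set ρ : Fin s → ℕ := fun i => if i ∈ S then f i else f i - 1 with hρ
      have hrows_eq : (fun i => if i ∈ S then u i else w i) =
          fun i j => v j (ρ i) := by
        funext i j
        by_cases h : i ∈ S
        · simp [h, hρ, hu]
        · simp [h, hρ, hw, hzero i h]
      rw [hrows_eq]
      have hmono : Monotone ρ := by
        intro i i' hii'
        rcases eq_or_lt_of_le hii' with rfl | hlt
        · exact le_rfl
        · have h1 : ρ i ≤ f i := by
            by_cases h : i ∈ S <;> simp [hρ, h, Nat.sub_le]
        -- f i ≤ f i' - 1 ≤ ρ i'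
          have h2 : f i ≤ f i' - 1 := Nat.le_sub_one_of_lt (hf hlt)
          have h3 : f i' - 1 ≤ ρ i' := by
            by_cases h : i' ∈ S <;> simp [hρ, h, Nat.sub_le]
          exact le_trans h1 (le_trans h2 h3)
      by_cases hinj : Function.Injective ρ
      · exact H ρ (hmono.strictMono_of_injective hinj)
      · rw [Function.not_injective_iff] at hinj
        obtain ⟨i, i', hval, hne⟩ := hinj
        have : Matrix.det (Matrix.of fun i j : Fin s => v j (ρ i)) = 0 := by
          apply Matrix.det_zero_of_row_eq hne
          funext j
          simp [hval]
        rw [show (Matrix.detRowAlternating (R := ℝ) (n := Fin s))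
            (fun i j => v j (ρ i)) = Matrix.det (Matrix.of fun i j : Fin s => v j (ρ i)) from
            rfl, this]
  exact smul_nonneg hcoef hrows



/-- Solve the recurrence `y n = x n + a n * y (n-1)`. -/
def solveWv (a : ℕ → ℝ) (x : ℕ → ℝ) : ℕ → ℝ
  | 0 => x 0
  | n + 1 => x (n + 1) + a (n + 1) * solveWv a x n

/-- Finite approximation of `solveWv` by elementary row combinations. -/
def Wapply (a : ℕ → ℝ) : ℕ → (ℕ → ℝ) → (ℕ → ℝ)
  | 0, x => x
  | F + 1, x => combv (fun _ => 1) (fun n => if n = F + 1 then a n else 0) (Wapply a F x)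

lemma Wapply_eq_of_gt (a : ℕ → ℝ) (x : ℕ → ℝ) (F n : ℕ) (h : F < n) :
    Wapply a F x n = x n := by
  induction F generalizing n with
  | zero => rfl
  | succ F ih =>
    obtain ⟨m, rfl⟩ : ∃ m, n = m + 1 := ⟨n - 1, by omega⟩
    have hne : m + 1 ≠ F + 1 := by omega
    simp only [Wapply, combv, hne, if_false, one_mul, zero_mul, add_zero]
    exact ih _ (by omega)

lemma Wapply_eq_of_le (a : ℕ → ℝ) (x : ℕ → ℝ) (F n : ℕ) (h : n ≤ F) :
    Wapply a F x n = solveWv a x n := by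
  induction F generalizing n with
  | zero =>
    interval_cases n
    rfl
  | succ F ih =>
    rcases Nat.lt_or_ge n (F + 1) with hn | hn
    · cases n with
      | zero => simp only [Wapply, combv]; rw [ih 0 (by omega)]; simp [solveWv]
      | succ m =>
        have hne : m + 1 ≠ F + 1 := by omega
        simp only [Wapply, combv, hne, if_false, one_mul, zero_mul, add_zero]
        exact ih _ (by omega)
    · have hn' : n = F + 1 := by omega
      subst hn'
      simp only [Wapply, combv, if_pos rfl, one_mul]
      rw [Wapply_eq_of_gt a x F (F+1) (by omega), ih F (by omega)]
      rfl

lemma solveW_det (a : ℕ → ℝ) (ha : ∀ n, 0 ≤ a n)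
    (s : ℕ) (v : Fin s → ℕ → ℝ)
    (H : ∀ f : Fin s → ℕ, StrictMono f →
      0 ≤ Matrix.det (Matrix.of fun i j : Fin s => v j (f i)))
    (f : Fin s → ℕ) (hf : StrictMono f) :
    0 ≤ Matrix.det (Matrix.of fun i j : Fin s => solveWv a (v j) (f i)) := by
  classical
  have key : ∀ F : ℕ, ∀ f : Fin s → ℕ, StrictMono f →
      0 ≤ Matrix.det (Matrix.of fun i j : Fin s => Wapply a F (v j) (f i)) := by
    intro F
    induction F with
    | zero => exact H
    | succ F ih =>
      intro f' hf'
      exact comb_det (fun _ => 1) (fun n => if n = F + 1 then a n else 0)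
        (fun _ => zero_le_one) (fun n => by show 0 ≤ (if n = F + 1 then a n else 0); split <;> simp [ha _])
        s (fun j => Wapply a F (v j)) ih f' hf'
  set F := Finset.univ.sup f with hF
  have hle : ∀ i, f i ≤ F := fun i => Finset.le_sup (Finset.mem_univ i)
  have : (Matrix.of fun i j : Fin s => solveWv a (v j) (f i)) =
      (Matrix.of fun i j : Fin s => Wapply a F (v j) (f i)) := by
    funext i j
    exact (Wapply_eq_of_le a (v j) F (f i) (hle i)).symm
  rw [this]
  exact key F f hf


/-- The column-to-column transfer operator. -/
def Mv (a b c : ℕ → ℝ) (x : ℕ → ℝ) : ℕ → ℝ :=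
  combv b c (combv (fun _ => 0) (fun _ => 1) (solveWv a x))

/-- The columns of the auxiliary matrix `K`. -/
def Kcol (a b c : ℕ → ℝ) : ℕ → ℕ → ℝ
  | 0 => fun n => if n = 0 then 1 else 0
  | k + 1 => Mv a b c (Kcol a b c k)

lemma Kcol_zero_row (a b c : ℕ → ℝ) (k : ℕ) :
    Kcol a b c k 0 = if k = 0 then 1 else 0 := by
  cases k with
  | zero => rfl
  | succ k => simp [Kcol, Mv, combv]

/-- Total positivity of `K`, with the `g 0 = 0` base case. -/
lemma K_tp_g0 (a b c : ℕ → ℝ) (s : ℕ)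
    (IH : ∀ f g : Fin s → ℕ, StrictMono f → StrictMono g →
      0 ≤ Matrix.det (Matrix.of fun i j : Fin s => Kcol a b c (g j) (f i)))
    (f g : Fin (s + 1) → ℕ) (hf : StrictMono f) (hg : StrictMono g) (hg0 : g 0 = 0) :
    0 ≤ Matrix.det (Matrix.of fun i j : Fin (s + 1) => Kcol a b c (g j) (f i)) := by
  classical
  set A : Matrix (Fin (s + 1)) (Fin (s + 1)) ℝ :=
    Matrix.of fun i j : Fin (s + 1) => Kcol a b c (g j) (f i) with hA
  by_cases hf0 : f 0 = 0
  · have hcol : ∀ i, A i 0 = if i = 0 then 1 else 0 := by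
      intro i
      have : A i 0 = if f i = 0 then 1 else 0 := by
        simp [hA, hg0, Kcol]
      rw [this]
      by_cases hi : i = 0
      · subst hi; simp [hf0]
      · have : f 0 < f i := hf (Fin.pos_of_ne_zero hi)
        have hne : f i ≠ 0 := by omega
        simp [hne, hi]
    rw [Matrix.det_succ_column_zero]
    rw [Finset.sum_eq_single 0]
    · have h00 : A 0 0 = 1 := by rw [hcol]; simp
      rw [h00]
      simp only [Fin.val_zero, pow_zero, one_mul, mul_one]
      have hsub : (A.submatrix (Fin.succAbove 0) Fin.succ) =
          Matrix.of fun i j : Fin s => Kcol a b c (g j.succ) (f i.succ) := by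
        funext i j
        simp [Matrix.submatrix, hA, Fin.succAbove_zero]
      rw [hsub]
      exact IH (fun i => f i.succ) (fun j => g j.succ)
        (fun i i' h => hf (by simpa using h)) (fun j j' h => hg (by simpa using h))
    · intro i _ hi
      rw [hcol]
      simp [hi]
    · intro h
      exact absurd (Finset.mem_univ 0) h
  · apply le_of_eq
    symm
    apply Matrix.det_eq_zero_of_column_eq_zero 0
    intro i
    have : f 0 ≤ f i := hf.monotone (Fin.zero_le i)
    have hne : f i ≠ 0 := by omega
    simp [hA, hg0, Kcol, hne]

lemma K_tp (a b c : ℕ → ℝ) (ha : ∀ n, 0 ≤ a n) (hb : ∀ n, 0 ≤ b n) (hc : ∀ n, 0 ≤ c n) :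
    ∀ s, ∀ f g : Fin s → ℕ, StrictMono f → StrictMono g →
      0 ≤ Matrix.det (Matrix.of fun i j : Fin s => Kcol a b c (g j) (f i)) := by
  intro s
  induction s with
  | zero =>
    intro f g _ _
    simp [Matrix.det_isEmpty]
  | succ s ihs =>
    suffices h : ∀ N, ∀ f g : Fin (s + 1) → ℕ, StrictMono f → StrictMono g →
        (∀ j, g j ≤ N) →
        0 ≤ Matrix.det (Matrix.of fun i j : Fin (s + 1) => Kcol a b c (g j) (f i)) by
      intro f g hf hg
      exact h (Finset.univ.sup g) f g hf hg (fun j => Finset.le_sup (Finset.mem_univ j))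
    intro N
    induction N with
    | zero =>
      intro f g hf hg hbound
      exact K_tp_g0 a b c s ihs f g hf hg (Nat.le_zero.mp (hbound 0))
    | succ N ihN =>
      intro f g hf hg hbound
      by_cases hg0 : g 0 = 0
      · exact K_tp_g0 a b c s ihs f g hf hg hg0
      · have hg1 : ∀ j, 1 ≤ g j := by
          intro j
          have : g 0 ≤ g j := hg.monotone (Fin.zero_le j)
          omega
        have hstep : (Matrix.of fun i j : Fin (s + 1) => Kcol a b c (g j) (f i)) =
            Matrix.of fun i j : Fin (s + 1) =>
              combv b c (combv (fun _ => 0) (fun _ => 1)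
                (solveWv a (Kcol a b c (g j - 1)))) (f i) := by
          funext i j
          have : g j = (g j - 1) + 1 := by have := hg1 j; omega
          rw [Matrix.of_apply, Matrix.of_apply, this]
          rfl
        rw [hstep]
        have hg' : StrictMono (fun j : Fin (s+1) => g j - 1) := by
          intro j j' h
          have h1 := hg h
          have h2 := hg1 j
          simp only []
          omega
        have H1 : ∀ f' : Fin (s + 1) → ℕ, StrictMono f' →
            0 ≤ Matrix.det (Matrix.of fun i j : Fin (s + 1) =>
              Kcol a b c (g j - 1) (f' i)) :=
          fun f' hf' => ihN f' (fun j => g j - 1) hf' hg'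
            (fun j => by have := hbound j; show g j - 1 ≤ N; omega)
        have H2 : ∀ f' : Fin (s + 1) → ℕ, StrictMono f' →
            0 ≤ Matrix.det (Matrix.of fun i j : Fin (s + 1) =>
              solveWv a (Kcol a b c (g j - 1)) (f' i)) :=
          fun f' hf' => solveW_det a ha (s + 1) (fun j => Kcol a b c (g j - 1)) H1 f' hf'
        have H3 : ∀ f' : Fin (s + 1) → ℕ, StrictMono f' →
            0 ≤ Matrix.det (Matrix.of fun i j : Fin (s + 1) =>
              combv (fun _ => 0) (fun _ => 1) (solveWv a (Kcol a b c (g j - 1))) (f' i)) :=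
          fun f' hf' => comb_det (fun _ => 0) (fun _ => 1) (fun _ => le_rfl)
            (fun _ => zero_le_one) (s + 1)
            (fun j => solveWv a (Kcol a b c (g j - 1))) H2 f' hf'
        exact comb_det b c hb hc (s + 1)
          (fun j => combv (fun _ => 0) (fun _ => 1) (solveWv a (Kcol a b c (g j - 1)))) H3 f hf


/-- The reconstructed reversal matrix. -/
def Sm (a b c : ℕ → ℝ) (n k : ℕ) : ℝ := solveWv a (Kcol a b c k) n

lemma Sm_00 (a b c : ℕ → ℝ) : Sm a b c 0 0 = 1 := by
  simp [Sm, solveWv, Kcol]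

lemma Sm_0succ (a b c : ℕ → ℝ) (k : ℕ) : Sm a b c 0 (k + 1) = 0 := by
  have : Sm a b c 0 (k + 1) = Kcol a b c (k + 1) 0 := rfl
  rw [this, Kcol_zero_row]
  simp

lemma Sm_succ0 (a b c : ℕ → ℝ) (n : ℕ) :
    Sm a b c (n + 1) 0 = a (n + 1) * Sm a b c n 0 := by
  simp [Sm, solveWv, Kcol]

lemma Sm_1succ (a b c : ℕ → ℝ) (k : ℕ) :
    Sm a b c 1 (k + 1) = a 1 * Sm a b c 0 (k + 1) + b 1 * Sm a b c 0 k := by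
  simp only [Sm, solveWv, Kcol, Mv, combv]
  ring

lemma Sm_sscc (a b c : ℕ → ℝ) (n k : ℕ) :
    Sm a b c (n + 2) (k + 1) = a (n + 2) * Sm a b c (n + 1) (k + 1)
      + b (n + 2) * Sm a b c (n + 1) k + c (n + 2) * Sm a b c n k := by
  simp only [Sm, solveWv, Kcol, Mv, combv]
  ring

end NRecAux



open NRecAux in
/-- An `n`-recursive matrix `T` given by
`t_{n,k} = a_n t_{n−1,k−1} + b_n t_{n−1,k} + c_n t_{n−2,k−1}` with nonnegative
coefficient sequences has totally positive reversal `[t_{n,n-k}]`. -/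
theorem nRecursive_reversal_totallyPos (a b c : ℕ → ℝ) (T : ℕ → ℕ → ℝ)
    (ha : ∀ n, 0 ≤ a n) (hb : ∀ n, 0 ≤ b n) (hc : ∀ n, 0 ≤ c n)
    (h00 : T 0 0 = 1) (hz : ∀ n k, n < k → T n k = 0)
    (h10 : T 1 0 = b 1 * T 0 0)
    (h1k : ∀ k, T 1 (k + 1) = a 1 * T 0 k + b 1 * T 0 (k + 1))
    (hrec0 : ∀ n, T (n + 2) 0 = b (n + 2) * T (n + 1) 0)
    (hrec : ∀ n k, T (n + 2) (k + 1) =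
      a (n + 2) * T (n + 1) k + b (n + 2) * T (n + 1) (k + 1) + c (n + 2) * T n k) :
    TotallyPos (fun n k => if k ≤ n then T n (n - k) else 0) := by
  have key : ∀ n, (∀ k, (if k ≤ n then T n (n - k) else 0) = Sm a b c n k) ∧
      (∀ k, (if k ≤ n + 1 then T (n + 1) (n + 1 - k) else 0) = Sm a b c (n + 1) k) := by
    intro n
    induction n with
    | zero =>
      constructor
      · intro k
        match k with
        | 0 => simpa [Sm_00] using h00
        | k + 1 => simp [Sm_0succ]
      · intro k
        match k with
        | 0 =>
          have hT11 : T 1 1 = a 1 := by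
            rw [h1k 0, h00, hz 0 1 (by omega)]; ring
          simp [hT11, Sm_succ0, Sm_00]
        | 1 =>
          have hT10 : T 1 0 = b 1 := by rw [h10, h00]; ring
          simp [hT10, Sm_1succ, Sm_0succ, Sm_00]
        | k + 2 =>
          have : ¬ (k + 2 ≤ 1) := by omega
          simp [this, Sm_1succ, Sm_0succ]
    | succ n ih =>
      refine ⟨ih.2, ?_⟩
      intro k
      match k with
      | 0 =>
        have hT : T (n + 2) (n + 2) = a (n + 2) * T (n + 1) (n + 1) := by
          rw [hrec n (n + 1), hz (n + 1) (n + 2) (by omega), hz n (n + 1) (by omega)]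
          ring
        have h1 := ih.2 0
        simp only [Nat.le_zero, Nat.zero_le, if_pos, Nat.sub_zero] at h1 ⊢
        rw [hT, Sm_succ0, ← h1]
      | k + 1 =>
        rw [Sm_sscc, ← ih.2 (k + 1), ← ih.2 k, ← ih.1 k]
        rcases Nat.lt_or_ge n k with hnk | hnk
        · rcases Nat.lt_or_ge (n + 1) k with hnk2 | hnk2
          · -- k ≥ n + 2 : everything vanishes
            rw [if_neg (by omega), if_neg (by omega), if_neg (by omega), if_neg (by omega)]
            ring
          · -- k = n + 1
            have hk : k = n + 1 := by omega
            subst hk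
            rw [if_pos (by omega), if_neg (by omega), if_pos (by omega), if_neg (by omega)]
            have e1 : n + 2 - (n + 1 + 1) = 0 := by omega
            have e2 : n + 1 - (n + 1) = 0 := by omega
            rw [e1, e2, hrec0 n]
            ring
        · -- k ≤ n : the generic case
          rw [if_pos (by omega), if_pos (by omega), if_pos (by omega), if_pos (by omega)]
          have e1 : n + 2 - (k + 1) = (n - k) + 1 := by omega
          have e2 : n + 1 - (k + 1) = n - k := by omega
          have e3 : n + 1 - k = (n - k) + 1 := by omega
          rw [e1, e2, e3, hrec n (n - k)]
  intro s f g hf hg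
  have hrw : (Matrix.of fun i j : Fin s =>
      (fun n k => if k ≤ n then T n (n - k) else 0) (f i) (g j)) =
      Matrix.of fun i j : Fin s => solveWv a (Kcol a b c (g j)) (f i) := by
    funext i j
    exact (key (f i)).1 (g j)
  rw [hrw]
  exact solveW_det a ha s (fun j => Kcol a b c (g j))
    (fun f' hf' => K_tp a b c ha hb hc s f' g hf' hg) f hf
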